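/- Let γ > 1, c_v > 0, s₀ ∈ ℝ, p̄ > 0, ρ̄ > 0 and μ² = (γ−1)/(γ+1). With φ the piecewise density function of the 3-Lax curve, i.e. φ(σ) = ρ̄(σ/p̄)^{1/γ} for σ ≤ p̄ and φ(σ) = ρ̄(σ + μ²p̄)/(μ²σ + p̄) for σ > p̄, the specific entropy along the 3-Lax curve, s(σ) = c_v·ln(σ/φ(σ)^γ) + s₀, is differentiable at σ = p̄ with s'(p̄) = 0. -/

import Mathlib

/-- The specific entropy s(σ) = c_v ln(σ/φ(σ)^γ) + s₀ along the
3-Lax curve of the polytropic Euler equations is differentiable at σ = p̄ with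
derivative 0. -/
theorem entropy_deriv_along_lax3
    (γ cv s₀ pbar ρbar μsq : ℝ) (hγ : 1 < γ) (hcv : 0 < cv)
    (hpbar : 0 < pbar) (hρbar : 0 < ρbar) (hμ : μsq = (γ - 1) / (γ + 1))
    (φ : ℝ → ℝ)
    (hφ : ∀ σ : ℝ, φ σ =
      if σ ≤ pbar then ρbar * (σ / pbar) ^ (1 / γ)
      else ρbar * (σ + μsq * pbar) / (μsq * σ + pbar)) :
    HasDerivAt (fun σ => cv * Real.log (σ / φ σ ^ γ) + s₀) 0 pbar := by
  have hγ0 : (0:ℝ) < γ := by linarith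
  have hγne : γ ≠ 0 := ne_of_gt hγ0
  have hμpos : 0 < μsq := by
    rw [hμ]; apply div_pos <;> linarith
  set f : ℝ → ℝ := fun σ => cv * Real.log (σ / φ σ ^ γ) + s₀ with hf
  set c : ℝ := cv * (Real.log pbar - γ * Real.log ρbar) + s₀ with hc
  -- value of f at points 0 < σ ≤ pbar : constant
  have hleftval : ∀ σ : ℝ, 0 < σ → σ ≤ pbar → f σ = c := by
    intro σ hσ0 hσle
    have ht : (0:ℝ) < (σ / pbar) ^ (1 / γ) := Real.rpow_pos_of_pos (div_pos hσ0 hpbar) _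
    have hX : (0:ℝ) < ρbar * (σ / pbar) ^ (1 / γ) := mul_pos hρbar ht
    have hXγ : (0:ℝ) < (ρbar * (σ / pbar) ^ (1 / γ)) ^ γ := Real.rpow_pos_of_pos hX _
    simp only [hf, hφ σ, if_pos hσle]
    rw [Real.log_div (ne_of_gt hσ0) (ne_of_gt hXγ), Real.log_rpow hX,
      Real.log_mul (ne_of_gt hρbar) (ne_of_gt ht), Real.log_rpow (div_pos hσ0 hpbar),
      Real.log_div (ne_of_gt hσ0) (ne_of_gt hpbar)]
    field_simp
    ring
  have hfpbar : f pbar = c := hleftval pbar hpbar le_rfl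
  -- left derivative
  have hleft : HasDerivWithinAt f 0 (Set.Iic pbar) pbar := by
    have heq : f =ᶠ[nhdsWithin pbar (Set.Iic pbar)] fun _ => c := by
      filter_upwards [self_mem_nhdsWithin,
        mem_nhdsWithin_of_mem_nhds (Ioi_mem_nhds hpbar)] with σ h1 h2
      exact hleftval σ h2 h1
    exact ((hasDerivWithinAt_const pbar (Set.Iic pbar) c).congr_of_eventuallyEq heq hfpbar)
  -- right part: the auxiliary smooth function h
  set h : ℝ → ℝ := fun σ =>
    cv * (Real.log σ - γ * (Real.log ρbar + Real.log (σ + μsq * pbar)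
      - Real.log (μsq * σ + pbar))) + s₀ with hh
  have hA : (0:ℝ) < pbar + μsq * pbar := by positivity
  have hB : (0:ℝ) < μsq * pbar + pbar := by positivity
  have hder : HasDerivAt h 0 pbar := by
    have d1 : HasDerivAt Real.log (1 / pbar) pbar := by
      simpa [one_div] using Real.hasDerivAt_log (ne_of_gt hpbar)
    have d2 : HasDerivAt (fun σ : ℝ => Real.log (σ + μsq * pbar))
        (1 / (pbar + μsq * pbar)) pbar := by
      have : HasDerivAt (fun σ : ℝ => σ + μsq * pbar) 1 pbar :=
        (hasDerivAt_id pbar).add_const _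
      simpa [one_div] using this.log (ne_of_gt hA)
    have d3 : HasDerivAt (fun σ : ℝ => Real.log (μsq * σ + pbar))
        (μsq / (μsq * pbar + pbar)) pbar := by
      have : HasDerivAt (fun σ : ℝ => μsq * σ + pbar) μsq pbar := by
        simpa using ((hasDerivAt_id pbar).const_mul μsq).add_const pbar
      simpa [div_eq_mul_inv, mul_comm] using this.log (ne_of_gt hB)
    have D := ((d1.sub (((d2.const_add (Real.log ρbar)).sub d3).const_mul γ)).const_mul
      cv).add_const s₀
    have hD0 : cv * (1 / pbar - γ * (1 / (pbar + μsq * pbar) - μsq / (μsq * pbar + pbar)))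
        = 0 := by
      have h1 : γ + 1 ≠ 0 := by linarith
      have key : 1 / (pbar + μsq * pbar) - μsq / (μsq * pbar + pbar)
          = (1 - μsq) / ((1 + μsq) * pbar) := by
        rw [show pbar + μsq * pbar = (1 + μsq) * pbar from by ring,
          show μsq * pbar + pbar = (1 + μsq) * pbar from by ring, div_sub_div_same]
      have key2 : γ * ((1 - μsq) / ((1 + μsq) * pbar)) = 1 / pbar := by
        rw [hμ]
        have h2 : (0:ℝ) < 1 + (γ - 1) / (γ + 1) := by
          have : (0:ℝ) < (γ - 1) / (γ + 1) := div_pos (by linarith) (by linarith)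
          linarith
        field_simp
        rw [div_eq_one_iff_eq (ne_of_gt (by linarith))]; ring
      rw [key, key2, sub_self, mul_zero]
    rw [hD0] at D
    exact D
  -- f = h for σ ≥ pbar
  have hrightval : ∀ σ : ℝ, pbar ≤ σ → f σ = h σ := by
    intro σ hσge
    have hσ0 : 0 < σ := lt_of_lt_of_le hpbar hσge
    have hA' : (0:ℝ) < σ + μsq * pbar := by positivity
    have hB' : (0:ℝ) < μsq * σ + pbar := by positivity
    have hφσ : φ σ = ρbar * (σ + μsq * pbar) / (μsq * σ + pbar) := by
      rcases eq_or_lt_of_le hσge with hEq | hlt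
      · rw [hφ σ, if_pos (le_of_eq hEq.symm), ← hEq]
        rw [div_self (ne_of_gt hpbar), Real.one_rpow, mul_one, mul_div_assoc,
          show pbar + μsq * pbar = μsq * pbar + pbar from by ring,
          div_self (ne_of_gt hB), mul_one]
      · rw [hφ σ, if_neg (not_le.mpr hlt)]
    have hX : (0:ℝ) < ρbar * (σ + μsq * pbar) / (μsq * σ + pbar) := by positivity
    have hXγ : (0:ℝ) < (ρbar * (σ + μsq * pbar) / (μsq * σ + pbar)) ^ γ :=
      Real.rpow_pos_of_pos hX _
    simp only [hf, hh, hφσ]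
    rw [Real.log_div (ne_of_gt hσ0) (ne_of_gt hXγ), Real.log_rpow hX,
      Real.log_div (by positivity : ρbar * (σ + μsq * pbar) ≠ 0) (ne_of_gt hB'),
      Real.log_mul (ne_of_gt hρbar) (ne_of_gt hA')]
  have hright : HasDerivWithinAt f 0 (Set.Ici pbar) pbar := by
    have heq : f =ᶠ[nhdsWithin pbar (Set.Ici pbar)] h := by
      filter_upwards [self_mem_nhdsWithin] with σ h1
      exact hrightval σ h1
    exact (hder.hasDerivWithinAt.congr_of_eventuallyEq heq (hrightval pbar le_rfl))
  have := hleft.union hright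
  rw [Set.Iic_union_Ici] at this
  exact hasDerivWithinAt_univ.mp this
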